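/- Lovász Local Lemma (symmetric, variable version): Let X be a set, k ≥ 1, and let 𝓑 be a collection of bad k-events over X. Suppose there exist p ∈ [0,1) and d ∈ ℕ such that every B ∈ 𝓑 satisfies ℙ[B] ≤ p and deg_𝓑(B) ≤ d, and e·p·(d+1) < 1. Then there exists a function f : X → k avoiding every B ∈ 𝓑. -/

import Mathlib

open Finset
namespace LLL
attribute [local instance] Classical.propDecidable
variable {X : Type*} {k : ℕ}
abbrev Ev (X : Type*) (k : ℕ) := (Σ D : Finset X, Finset ({x // x ∈ D} → Fin k))
def resTo {W : Finset X} (C : Finset X) (h : C ⊆ W) (g : {x // x ∈ W} → Fin k) :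
    {x // x ∈ C} → Fin k := fun x => g ⟨x.1, h x.2⟩
def Av (W : Finset X) (C : Ev X k) (g : {x // x ∈ W} → Fin k) : Prop :=
  ∀ h : C.1 ⊆ W, resTo C.1 h g ∉ C.2
noncomputable def good (W : Finset X) (S : Finset (Ev X k)) :
    Finset ({x // x ∈ W} → Fin k) :=
  univ.filter (fun g => ∀ C ∈ S, Av W C g)
lemma good_anti {W : Finset X} {S T : Finset (Ev X k)} (h : T ⊆ S) :
    good W S ⊆ good (k := k) W T := by
  intro g hg
  simp only [good, mem_filter, mem_univ, true_and] at hg ⊢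
  exact fun C hC => hg C (h hC)

lemma good_empty (W : Finset X) : good (X := X) (k := k) W ∅ = univ := by
  simp [good]

lemma card_good_empty (W : Finset X) : (good (X := X) (k := k) W ∅).card = k ^ W.card := by
  rw [good_empty, card_univ]
  rw [Fintype.card_fun, Fintype.card_coe, Fintype.card_fin]

lemma good_insert (W : Finset X) (S : Finset (Ev X k)) (B : Ev X k) :
    good W (insert B S) = (good W S).filter (fun g => Av W B g) := by
  ext g
  simp only [good, mem_filter, mem_univ, true_and, mem_insert]
  constructor
  · exact fun h => ⟨fun C hC => h C (Or.inr hC), h B (Or.inl rfl)⟩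
  · rintro ⟨h1, h2⟩ C (rfl | hC)
    · exact h2
    · exact h1 C hC

noncomputable def split (V D : Finset X) (hD : D ⊆ V) :
    ({x // x ∈ V} → Fin k) ≃ ({x // x ∈ D} → Fin k) × ({x // x ∈ V \ D} → Fin k) where
  toFun g := (fun x => g ⟨x.1, hD x.2⟩, fun x => g ⟨x.1, (mem_sdiff.mp x.2).1⟩)
  invFun h x := if hx : x.1 ∈ D then h.1 ⟨x.1, hx⟩ else h.2 ⟨x.1, mem_sdiff.mpr ⟨x.2, hx⟩⟩
  left_inv g := by
    funext x; dsimp only; split <;> rfl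
  right_inv h := by
    refine Prod.ext ?_ ?_ <;> funext x <;> dsimp only
    · rw [dif_pos x.2]
    · rw [dif_neg (mem_sdiff.mp x.2).2]
lemma card_filter_split (V D : Finset X) (hD : D ⊆ V)
    (PB : ({x // x ∈ D} → Fin k) → Prop) (PS : ({x // x ∈ V \ D} → Fin k) → Prop)
    [DecidablePred PB] [DecidablePred PS] :
    (univ.filter fun g : {x // x ∈ V} → Fin k =>
        PB (split V D hD g).1 ∧ PS (split V D hD g).2).card
      = (univ.filter PB).card * (univ.filter PS).card := by
  rw [← card_product, ← Finset.filter_product, Finset.univ_product_univ]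
  exact Finset.card_equiv (split V D hD) (by
    intro g; simp only [mem_filter, mem_univ, true_and])

-- NEW PART:
/-- Avoidance of events living inside `V \ D` only depends on the second component. -/
lemma av_split {V : Finset X} {B : Ev X k} (hD : B.1 ⊆ V) {C : Ev X k}
    (hC : C.1 ⊆ V \ B.1) (g : {x // x ∈ V} → Fin k) :
    Av V C g ↔ Av (V \ B.1) C (split V B.1 hD g).2 := by
  constructor
  · intro H h
    have : resTo C.1 h (split V B.1 hD g).2 = resTo C.1 (h.trans sdiff_subset) g := rfl
    rw [this]
    exact H _
  · intro H h
    have : resTo C.1 h g = resTo C.1 hC (split V B.1 hD g).2 := rfl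
    rw [this]
    exact H _

lemma not_av_iff {V : Finset X} {B : Ev X k} (hD : B.1 ⊆ V) (g : {x // x ∈ V} → Fin k) :
    ¬ Av V B g ↔ resTo B.1 hD g ∈ B.2 := by
  unfold Av
  push_neg
  constructor
  · rintro ⟨h, hm⟩; exact hm
  · intro hm; exact ⟨hD, hm⟩

/-- Independence: count of (bad at B) ∧ (avoid S₂) where S₂ lives outside dom B. -/
lemma card_bad_and_avoid {V : Finset X} {B : Ev X k} (hD : B.1 ⊆ V)
    {S₂ : Finset (Ev X k)} (hS₂ : ∀ C ∈ S₂, C.1 ⊆ V \ B.1) :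
    ((good V S₂).filter fun g => ¬ Av V B g).card
      = B.2.card * (good (V \ B.1) S₂).card := by
  have e1 : (good V S₂).filter (fun g => ¬ Av V B g)
      = univ.filter fun g : {x // x ∈ V} → Fin k =>
          ((split V B.1 hD g).1 ∈ B.2) ∧ (∀ C ∈ S₂, Av (V \ B.1) C (split V B.1 hD g).2) := by
    unfold good
    rw [filter_filter]
    apply filter_congr
    intro g _
    constructor
    · rintro ⟨hav, hb⟩
      exact ⟨(not_av_iff hD g).mp hb, fun C hC => (av_split hD (hS₂ C hC) g).mp (hav C hC)⟩
    · rintro ⟨hb, hav⟩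
      exact ⟨fun C hC => (av_split hD (hS₂ C hC) g).mpr (hav C hC), (not_av_iff hD g).mpr hb⟩
  rw [e1]
  refine (card_filter_split V B.1 hD (· ∈ B.2) (fun h => ∀ C ∈ S₂, Av (V \ B.1) C h)).trans ?_
  congr 1
  exact Finset.card_equiv (Equiv.refl _) (by intro a; simp)

lemma card_avoid {V : Finset X} {B : Ev X k} (hD : B.1 ⊆ V)
    {S₂ : Finset (Ev X k)} (hS₂ : ∀ C ∈ S₂, C.1 ⊆ V \ B.1) :
    (good V S₂).card = k ^ B.1.card * (good (V \ B.1) S₂).card := by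
  have e1 : good (k := k) V S₂
      = univ.filter fun g : {x // x ∈ V} → Fin k =>
          (True) ∧ (∀ C ∈ S₂, Av (V \ B.1) C (split V B.1 hD g).2) := by
    unfold good
    apply filter_congr
    intro g _
    simp only [true_and]
    constructor
    · exact fun hav C hC => (av_split hD (hS₂ C hC) g).mp (hav C hC)
    · exact fun hav C hC => (av_split hD (hS₂ C hC) g).mpr (hav C hC)
  rw [e1]
  refine (card_filter_split V B.1 hD (fun _ => True) (fun h => ∀ C ∈ S₂, Av (V \ B.1) C h)).trans ?_
  congr 1
  refine (Finset.card_equiv (Equiv.refl _) (by intro a; simp) :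
    (univ.filter (fun _ : ({x // x ∈ B.1} → Fin k) => True)).card = (univ : Finset ({x // x ∈ B.1} → Fin k)).card).trans ?_
  rw [card_univ, Fintype.card_fun, Fintype.card_coe, Fintype.card_fin]

section MainInduction
open Finset LLL
attribute [local instance] Classical.propDecidable
variable {X : Type*} {k : ℕ}

lemma main_induction (hk : 1 ≤ k)
    {𝓑 : Set (Ev X k)} {p q : ℝ} {d : ℕ}
    (hprob : ∀ B ∈ 𝓑, (B.2.card : ℝ) / (k : ℝ) ^ B.1.card ≤ p)
    (hdeg : ∀ B ∈ 𝓑, {B' ∈ 𝓑 | B' ≠ B ∧ ¬ Disjoint B'.1 B.1}.encard ≤ (d : ℕ∞))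
    (hq0 : 0 ≤ q) (hq1 : q < 1) (hpq : p ≤ q * (1 - q) ^ d)
    (u : Finset (Ev X k)) (hu : ↑u ⊆ 𝓑)
    (V : Finset X) (hV : ∀ C ∈ u, C.1 ⊆ V) :
    ∀ n (S : Finset (Ev X k)), S.card = n → S ⊆ u → ∀ B ∈ u, B ∉ S →
      (((good V S).filter fun g => ¬ Av V B g).card : ℝ) ≤ q * (good V S).card := by
  intro n
  induction n using Nat.strong_induction_on with
  | _ n ih =>
  intro S hScard hSu B hBu hBS
  have hB𝓑 : B ∈ 𝓑 := hu hBu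
  have hD : B.1 ⊆ V := hV B hBu
  set S₁ := S.filter (fun C => ¬ Disjoint C.1 B.1) with hS₁def
  set S₂ := S.filter (fun C => Disjoint C.1 B.1) with hS₂def
  have hS12 : S₂ ∪ S₁ = S := filter_union_filter_not_eq _ S
  have hS₁card : S₁.card ≤ d := by
    have hsub : ↑S₁ ⊆ {B' ∈ 𝓑 | B' ≠ B ∧ ¬ Disjoint B'.1 B.1} := by
      intro C hC
      rw [Finset.mem_coe, hS₁def, mem_filter] at hC
      obtain ⟨hCS, hnd⟩ := hC
      refine ⟨hu (hSu hCS), ?_, hnd⟩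
      rintro rfl
      exact hBS hCS
    have h2 := (Set.encard_mono hsub).trans (hdeg B hB𝓑)
    rwa [Set.encard_coe_eq_coe_finsetCard, Nat.cast_le] at h2
  have hS₂V : ∀ C ∈ S₂, C.1 ⊆ V \ B.1 := by
    intro C hC
    rw [hS₂def, mem_filter] at hC
    exact Finset.subset_sdiff.mpr ⟨hV C (hSu hC.1), hC.2⟩
  have hmono : ((good V S).filter fun g => ¬ Av V B g).card
      ≤ ((good V S₂).filter fun g => ¬ Av V B g).card := by
    apply card_le_card
    apply filter_subset_filter
    exact good_anti (by rw [hS₂def]; exact filter_subset _ _)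
  have hbadS₂ : (((good V S₂).filter fun g => ¬ Av V B g).card : ℝ)
      ≤ p * (good V S₂).card := by
    have h1 := card_bad_and_avoid hD hS₂V
    have h2 := card_avoid hD hS₂V
    have hm : (0:ℝ) ≤ ((good (V \ B.1) S₂).card : ℝ) := Nat.cast_nonneg _
    have hk' : (0:ℝ) < (k:ℝ) := by exact_mod_cast hk
    have hkpos : (0:ℝ) < (k:ℝ) ^ B.1.card := by positivity
    have hp' := hprob B hB𝓑
    rw [div_le_iff₀ hkpos] at hp'
    calc (((good V S₂).filter fun g => ¬ Av V B g).card : ℝ)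
        = (B.2.card : ℝ) * (good (V \ B.1) S₂).card := by rw [h1]; push_cast; ring
      _ ≤ (p * (k:ℝ) ^ B.1.card) * (good (V \ B.1) S₂).card :=
          mul_le_mul_of_nonneg_right hp' hm
      _ = p * ((k:ℝ) ^ B.1.card * (good (V \ B.1) S₂).card) := by ring
      _ = p * (good V S₂).card := by rw [h2]; push_cast; ring
  have h1q : (0:ℝ) ≤ 1 - q := by linarith
  have hgrow : ∀ T ⊆ S₁, ((1-q) ^ T.card * (good V S₂).card : ℝ) ≤ (good V (S₂ ∪ T)).card := by
    intro T
    induction T using Finset.induction_on with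
    | empty => intro _; simp
    | @insert a T' ha ihT =>
      intro hTsub
      have haS₁ : a ∈ S₁ := hTsub (mem_insert_self a T')
      have hT'sub : T' ⊆ S₁ := (subset_insert a T').trans hTsub
      have haS : a ∈ S := by
        rw [hS₁def] at haS₁; exact (filter_subset _ _) haS₁
      have hau : a ∈ u := hSu haS
      have haS₂ : a ∉ S₂ := by
        rw [hS₂def, mem_filter]
        rintro ⟨-, hdisj⟩
        rw [hS₁def, mem_filter] at haS₁
        exact haS₁.2 hdisj
      have haST : a ∉ S₂ ∪ T' := by
        rw [mem_union]
        rintro (h | h)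
        exacts [haS₂ h, ha h]
      have hsub' : S₂ ∪ T' ⊆ S :=
        union_subset (filter_subset _ _) (hT'sub.trans (filter_subset _ _))
      have hcard' : (S₂ ∪ T').card < n := by
        have hh : S₂ ∪ T' ⊆ S.erase a := subset_erase.mpr ⟨hsub', haST⟩
        calc (S₂ ∪ T').card ≤ (S.erase a).card := card_le_card hh
          _ < S.card := card_erase_lt_of_mem haS
          _ = n := hScard
      have hq' : (((good V (S₂ ∪ T')).filter fun g => ¬ Av V a g).card : ℝ)
          ≤ q * (good V (S₂ ∪ T')).card :=
        ih _ hcard' _ rfl (hsub'.trans hSu) a hau haST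
      have hnat : (good V (insert a (S₂ ∪ T'))).card
            + ((good V (S₂ ∪ T')).filter fun g => ¬ Av V a g).card
          = (good V (S₂ ∪ T')).card := by
        rw [good_insert]
        exact card_filter_add_card_filter_not _
      have hstep : (1 - q) * ((good V (S₂ ∪ T')).card : ℝ)
          ≤ (good V (insert a (S₂ ∪ T'))).card := by
        have hc : ((good V (S₂ ∪ T')).card : ℝ) = (good V (insert a (S₂ ∪ T'))).card
            + ((good V (S₂ ∪ T')).filter fun g => ¬ Av V a g).card := by
          exact_mod_cast hnat.symm
        rw [sub_mul, one_mul]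
        linarith
      calc ((1-q) ^ (insert a T').card * (good V S₂).card : ℝ)
          = (1-q) * ((1-q) ^ T'.card * (good V S₂).card) := by
            rw [card_insert_of_notMem ha, pow_succ]; ring
        _ ≤ (1-q) * (good V (S₂ ∪ T')).card :=
            mul_le_mul_of_nonneg_left (ihT hT'sub) h1q
        _ ≤ ((good V (insert a (S₂ ∪ T'))).card : ℝ) := hstep
        _ = ((good V (S₂ ∪ insert a T')).card : ℝ) := by rw [union_insert]
  have hA2 : (0:ℝ) ≤ (good V S₂).card := Nat.cast_nonneg _
  have hfin : ((1-q) ^ S₁.card * (good V S₂).card : ℝ) ≤ (good V S).card := by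
    have hh := hgrow S₁ (Finset.Subset.refl S₁)
    rwa [hS12] at hh
  calc (((good V S).filter fun g => ¬ Av V B g).card : ℝ)
      ≤ (((good V S₂).filter fun g => ¬ Av V B g).card : ℝ) := by exact_mod_cast hmono
    _ ≤ p * (good V S₂).card := hbadS₂
    _ ≤ (q * (1-q) ^ d) * (good V S₂).card := mul_le_mul_of_nonneg_right hpq hA2
    _ ≤ (q * (1-q) ^ S₁.card) * (good V S₂).card := by
        apply mul_le_mul_of_nonneg_right _ hA2
        exact mul_le_mul_of_nonneg_left (pow_le_pow_of_le_one h1q (by linarith) hS₁card) hq0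
    _ = q * ((1-q) ^ S₁.card * (good V S₂).card) := by ring
    _ ≤ q * (good V S).card := mul_le_mul_of_nonneg_left hfin hq0

end MainInduction
section Rest
open Finset LLL
attribute [local instance] Classical.propDecidable
variable {X : Type*} {k : ℕ}

lemma finite_lll (hk : 1 ≤ k)
    {𝓑 : Set (Ev X k)} {p q : ℝ} {d : ℕ}
    (hprob : ∀ B ∈ 𝓑, (B.2.card : ℝ) / (k : ℝ) ^ B.1.card ≤ p)
    (hdeg : ∀ B ∈ 𝓑, {B' ∈ 𝓑 | B' ≠ B ∧ ¬ Disjoint B'.1 B.1}.encard ≤ (d : ℕ∞))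
    (hq0 : 0 ≤ q) (hq1 : q < 1) (hpq : p ≤ q * (1 - q) ^ d)
    (u : Finset (Ev X k)) (hu : ↑u ⊆ 𝓑) :
    ∃ f : X → Fin k, ∀ B ∈ u, (fun x : {x // x ∈ B.1} => f x) ∉ B.2 := by
  set V : Finset X := u.sup Sigma.fst with hVdef
  have hV : ∀ C ∈ u, C.1 ⊆ V := fun C hC => Finset.le_sup hC
  have h1q : (0:ℝ) < 1 - q := by linarith
  -- growth from the empty family
  have hgrow : ∀ T ⊆ u, ((1-q) ^ T.card * (k:ℝ) ^ V.card) ≤ ((good V T).card : ℝ) := by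
    intro T
    induction T using Finset.induction_on with
    | empty =>
      intro _
      simp only [card_empty, pow_zero, one_mul, card_good_empty]
      push_cast
      exact le_refl _
    | @insert a T' ha ihT =>
      intro hTsub
      have hT'sub : T' ⊆ u := (subset_insert a T').trans hTsub
      have hau : a ∈ u := hTsub (mem_insert_self a T')
      have hq' : (((good V T').filter fun g => ¬ Av V a g).card : ℝ)
          ≤ q * (good V T').card :=
        main_induction hk hprob hdeg hq0 hq1 hpq u hu V hV T'.card T' rfl hT'sub a hau ha
      have hnat : (good V (insert a T')).card
            + ((good V T').filter fun g => ¬ Av V a g).card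
          = (good V T').card := by
        rw [good_insert]
        exact card_filter_add_card_filter_not _
      have hstep : (1 - q) * ((good V T').card : ℝ) ≤ (good V (insert a T')).card := by
        have hc : ((good V T').card : ℝ) = (good V (insert a T')).card
            + ((good V T').filter fun g => ¬ Av V a g).card := by exact_mod_cast hnat.symm
        rw [sub_mul, one_mul]
        linarith
      calc ((1-q) ^ (insert a T').card * (k:ℝ) ^ V.card)
          = (1-q) * ((1-q) ^ T'.card * (k:ℝ) ^ V.card) := by
            rw [card_insert_of_notMem ha, pow_succ]; ring
        _ ≤ (1-q) * (good V T').card := mul_le_mul_of_nonneg_left (ihT hT'sub) h1q.le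
        _ ≤ ((good V (insert a T')).card : ℝ) := hstep
  have hkpos : (0:ℝ) < (k:ℝ) ^ V.card := by
    have hk' : (0:ℝ) < (k:ℝ) := by exact_mod_cast hk
    positivity
  have hpos : 0 < ((good V u).card : ℝ) := by
    have := hgrow u (Finset.Subset.refl u)
    have hlhs : (0:ℝ) < (1-q) ^ u.card * (k:ℝ) ^ V.card := by positivity
    linarith
  have hne : (good V u).Nonempty := by
    rw [← Finset.card_pos]
    exact_mod_cast hpos
  obtain ⟨g, hg⟩ := hne
  simp only [good, mem_filter, mem_univ, true_and] at hg
  refine ⟨fun x => if hx : x ∈ V then g ⟨x, hx⟩ else ⟨0, hk⟩, ?_⟩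
  intro B hB
  have hBV : B.1 ⊆ V := hV B hB
  have heq : (fun x : {x // x ∈ B.1} =>
      (fun y => if hy : y ∈ V then g ⟨y, hy⟩ else (⟨0, hk⟩ : Fin k)) x.1)
      = resTo B.1 hBV g := by
    funext x
    simp only [resTo]
    rw [dif_pos (hBV x.2)]
  rw [heq]
  exact hg B hB hBV

lemma lll_analytic {p : ℝ} (hp0 : 0 ≤ p) (d : ℕ)
    (hcond : Real.exp 1 * p * (d + 1) < 1) :
    0 ≤ Real.exp 1 * p ∧ Real.exp 1 * p < 1 ∧
      p ≤ (Real.exp 1 * p) * (1 - Real.exp 1 * p) ^ d := by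
  set q := Real.exp 1 * p with hqdef
  have hq0 : 0 ≤ q := mul_nonneg (Real.exp_pos 1).le hp0
  have hd1 : (1:ℝ) ≤ (d:ℝ) + 1 := by
    have := Nat.cast_nonneg (α := ℝ) d
    linarith
  have hq1 : q < 1 := by
    have : q ≤ q * ((d:ℝ) + 1) := le_mul_of_one_le_right hq0 hd1
    linarith [hcond]
  refine ⟨hq0, hq1, ?_⟩
  rcases eq_or_lt_of_le hp0 with hp | hp
  · rw [← hp]
    have : q = 0 := by rw [hqdef, ← hp, mul_zero]
    rw [this]
    simp
  · have hqpos : 0 < q := mul_pos (Real.exp_pos 1) hp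
    have hdpos : (0:ℝ) < (d:ℝ) + 1 := by positivity
    have h1 : q < 1 / ((d:ℝ) + 1) := by
      rw [lt_div_iff₀ hdpos]
      exact hcond
    have h2 : (d:ℝ) / ((d:ℝ) + 1) ≤ 1 - q := by
      have he : (d:ℝ) / ((d:ℝ) + 1) = 1 - 1 / ((d:ℝ) + 1) := by field_simp; ring
      rw [he]
      linarith
    have h3 : Real.exp (-1) ≤ ((d:ℝ) / ((d:ℝ) + 1)) ^ d := by
      rcases Nat.eq_zero_or_pos d with hd | hd
      · subst hd
        simp only [pow_zero]
        calc Real.exp (-1) ≤ Real.exp 0 := Real.exp_le_exp.mpr (by norm_num)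
          _ = 1 := Real.exp_zero
      · have hdr : (0:ℝ) < (d:ℝ) := by exact_mod_cast hd
        have hbase : Real.exp (-(1 / (d:ℝ))) ≤ (d:ℝ) / ((d:ℝ) + 1) := by
          have hfrac : ((d:ℝ) + 1) / (d:ℝ) ≤ Real.exp (1 / (d:ℝ)) := by
            have hee := Real.add_one_le_exp (1 / (d:ℝ))
            have heq : ((d:ℝ) + 1) / (d:ℝ) = 1 / (d:ℝ) + 1 := by field_simp; ring
            rw [heq]
            exact hee
          have hppos : (0:ℝ) < ((d:ℝ) + 1) / (d:ℝ) := by positivity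
          calc Real.exp (-(1 / (d:ℝ))) = (Real.exp (1 / (d:ℝ)))⁻¹ := Real.exp_neg _
            _ ≤ (((d:ℝ) + 1) / (d:ℝ))⁻¹ := by gcongr
            _ = (d:ℝ) / ((d:ℝ) + 1) := by rw [inv_div]
        have hpow := pow_le_pow_left₀ (Real.exp_pos _).le hbase d
        rw [← Real.exp_nat_mul] at hpow
        have : (d:ℝ) * -(1 / (d:ℝ)) = -1 := by field_simp
        rwa [this] at hpow
    calc p = q * Real.exp (-1) := by
          rw [hqdef]
          rw [mul_comm (Real.exp 1) p, mul_assoc, ← Real.exp_add]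
          norm_num
      _ ≤ q * ((d:ℝ) / ((d:ℝ) + 1)) ^ d := mul_le_mul_of_nonneg_left h3 hq0
      _ ≤ q * (1 - q) ^ d := by
          apply mul_le_mul_of_nonneg_left _ hq0
          exact pow_le_pow_left₀ (div_nonneg (Nat.cast_nonneg d) hdpos.le) h2 d

end Rest
end LLL

/-- Symmetric Lovász Local Lemma in the variable framework: a bad `k`-event over `X` is a
nonempty finite set of functions on a common finite domain `D ⊆ X` (encoded as a sigma
type `Σ D : Finset X, Finset (D → Fin k)`). If every event in `𝓑` has probability at most
`p < 1`, at most `d` neighbors (events with overlapping domain), and `e·p·(d+1) < 1`, then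
some `f : X → Fin k` avoids every event of `𝓑`. -/
theorem lovasz_local_lemma {X : Type*} (k : ℕ) (hk : 1 ≤ k)
    (𝓑 : Set (Σ D : Finset X, Finset ({x // x ∈ D} → Fin k)))
    (hne : ∀ B ∈ 𝓑, B.2.Nonempty)
    (p : ℝ) (hp0 : 0 ≤ p) (hp1 : p < 1) (d : ℕ)
    (hprob : ∀ B ∈ 𝓑, (B.2.card : ℝ) / (k : ℝ) ^ B.1.card ≤ p)
    (hdeg : ∀ B ∈ 𝓑,
      {B' ∈ 𝓑 | B' ≠ B ∧ ¬ Disjoint B'.1 B.1}.encard ≤ (d : ℕ∞))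
    (hcond : Real.exp 1 * p * (d + 1) < 1) :
    ∃ f : X → Fin k, ∀ B ∈ 𝓑, (fun x : {x // x ∈ B.1} => f x) ∉ B.2 := by
  classical
  obtain ⟨hq0, hq1, hpq⟩ := LLL.lll_analytic hp0 d hcond
  letI : TopologicalSpace (Fin k) := ⊥
  haveI : DiscreteTopology (Fin k) := ⟨rfl⟩
  by_contra hcon
  push_neg at hcon
  set C : 𝓑 → Set (X → Fin k) :=
    fun B => {f | (fun x : {x // x ∈ B.1.1} => f x) ∉ B.1.2} with hCdef
  have hclosed : ∀ B : 𝓑, IsClosed (C B) := by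
    intro B
    have hcont : Continuous (fun f : X → Fin k => (fun x : {x // x ∈ B.1.1} => f x)) :=
      continuous_pi (fun x => continuous_apply x.1)
    exact IsClosed.preimage hcont (isClosed_discrete {h | h ∉ B.1.2})
  have hempty : (Set.univ : Set (X → Fin k)) ∩ ⋂ B : 𝓑, C B = ∅ := by
    rw [Set.eq_empty_iff_forall_notMem]
    intro f hf
    obtain ⟨B, hB, hm⟩ := hcon f
    have h2 := hf.2
    rw [Set.mem_iInter] at h2
    exact h2 ⟨B, hB⟩ hm
  obtain ⟨t, ht⟩ := IsCompact.elim_finite_subfamily_closed isCompact_univ C hclosed hempty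
  set u : Finset (LLL.Ev X k) := t.image Subtype.val with hudef
  have hu : ↑u ⊆ 𝓑 := by
    intro B hB
    rw [hudef, Finset.coe_image] at hB
    obtain ⟨a, _, rfl⟩ := hB
    exact a.2
  obtain ⟨f, hf⟩ := LLL.finite_lll hk hprob hdeg hq0 hq1 hpq u hu
  have hmem : f ∈ (Set.univ : Set (X → Fin k)) ∩ ⋂ B ∈ t, C B := by
    refine ⟨trivial, ?_⟩
    rw [Set.mem_iInter₂]
    intro B hB
    exact hf B.val (by rw [hudef]; exact Finset.mem_image_of_mem _ hB)
  rw [ht] at hmem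
  exact hmem
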